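/- For a functor D from the opposite of the category of finite sets to the category of finite sets, the following are equivalent: (1) D is isomorphic to a finite coproduct of representable presheaves Fin(–, dᵢ) (i.e. D is a Dirichlet functor); (2) D preserves wide pullbacks, i.e. D sends wide pushout colimit cocones in FintypeCat to limit cones in FintypeCat. -/

import Mathlib

/- STATEMENT 1: For a functor `D : FintypeCatᵒᵖ ⥤ FintypeCat`, the following are equivalent:
(1) `D` is isomorphic to a finite coproduct of representable presheaves `Fin(–, dᵢ)`
    (i.e. `D` is a Dirichlet functor);
(2) `D` preserves wide pullbacks, i.e. `D` sends wide pushout colimit cocones in `FintypeCat`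
    to limit cones in `FintypeCat`. -/

open CategoryTheory CategoryTheory.Limits Opposite

noncomputable section

noncomputable instance (X Y : FintypeCat.{0}) : Fintype (X ⟶ Y) := by
  classical exact Fintype.ofFinite _

/-- The finite coproduct `∐ᵢ Fin(–, dᵢ)` of representable presheaves `FintypeCatᵒᵖ ⥤ FintypeCat`. -/
def dirichletSum {I : Type} [Fintype I] (d : I → FintypeCat.{0}) :
    FintypeCat.{0}ᵒᵖ ⥤ FintypeCat.{0} where
  obj X := FintypeCat.of (Σ i, (X.unop ⟶ d i))
  map f := FintypeCat.homMk fun x => ⟨x.1, f.unop ≫ x.2⟩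

/-- A Dirichlet functor is a finite coproduct of representable presheaves. -/
def IsDirichlet (D : FintypeCat.{0}ᵒᵖ ⥤ FintypeCat.{0}) : Prop :=
  ∃ (I : Type) (_ : Fintype I) (d : I → FintypeCat.{0}), Nonempty (D ≅ dirichletSum d)

namespace DirichletAux

/-! ### Part A : `dirichletSum d` sends wide pushout colimit cocones to limit cones -/

section PartA

variable {I : Type} [Fintype I] {d : I → FintypeCat.{0}}
variable {J : Type} {F : WidePushoutShape J ⥤ FintypeCat.{0}} {c : Cocone F}

lemma descSigma (hc : IsColimit c)
    (v : ∀ k : WidePushoutShape J, Σ i, (F.obj k ⟶ d i))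
    (hv : ∀ j : J,
      (⟨(v (some j)).1, F.map (WidePushoutShape.Hom.init j) ≫ (v (some j)).2⟩ :
        Σ i, (F.obj none ⟶ d i)) = v none) :
    ∃ y : Σ i, (c.pt ⟶ d i),
      ∀ k, (⟨y.1, c.ι.app k ≫ y.2⟩ : Σ i, (F.obj k ⟶ d i)) = v k := by
  have hfst : ∀ k, (v k).1 = (v none).1 := by
    rintro (_ | j)
    · rfl
    · exact congrArg Sigma.fst (hv j)
  have hu : ∀ k, ∃ u : F.obj k ⟶ d (v none).1, v k = ⟨(v none).1, u⟩ := by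
    intro k
    have hk := hfst k
    rcases hvk : v k with ⟨i, u⟩
    rw [hvk] at hk
    subst hk
    exact ⟨u, rfl⟩
  choose u hu using hu
  have hnat : ∀ j : J, F.map (WidePushoutShape.Hom.init j) ≫ u (some j) = u none := by
    intro j
    have h := (congrArg
      (fun z : Σ i, (F.obj (some j) ⟶ d i) =>
        (⟨z.1, F.map (WidePushoutShape.Hom.init j) ≫ z.2⟩ : Σ i, (F.obj none ⟶ d i)))
      (hu (some j))).symm.trans ((hv j).trans (hu none))
    exact eq_of_heq (Sigma.ext_iff.mp h).2
  refine ⟨⟨(v none).1, hc.desc ⟨d (v none).1, ⟨u, ?_⟩⟩⟩, ?_⟩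
  · intro a b f
    cases f using WidePushoutShape.Hom.casesOn with
    | id a => simp
    | init j => simpa using hnat j
  · intro k
    rw [hu k]
    exact congrArg (Sigma.mk _) (hc.fac _ k)

lemma sigmaHomExt (hc : IsColimit c) {y y' : Σ i, (c.pt ⟶ d i)}
    (h : ∀ k, (⟨y.1, c.ι.app k ≫ y.2⟩ : Σ i, (F.obj k ⟶ d i)) =
      ⟨y'.1, c.ι.app k ≫ y'.2⟩) :
    y = y' := by
  obtain ⟨i, f⟩ := y
  obtain ⟨i', f'⟩ := y'
  obtain ⟨h1, -⟩ := Sigma.ext_iff.mp (h none)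
  dsimp at h1
  subst h1
  refine congrArg (Sigma.mk i) (hc.hom_ext fun k => ?_)
  exact eq_of_heq (Sigma.ext_iff.mp (h k)).2

/-- `dirichletSum d` sends wide pushout colimit cocones to limit cones. -/
noncomputable def dirichletSumPreserves (d : I → FintypeCat.{0}) (hc : IsColimit c) :
    IsLimit ((dirichletSum d).mapCone c.op) := by
  have hv : ∀ (s : Cone (F.op ⋙ dirichletSum d)) (p : s.pt) (j : J),
      (⟨Sigma.fst (s.π.app (op (some j)) p),
        F.map (WidePushoutShape.Hom.init j) ≫ Sigma.snd (s.π.app (op (some j)) p)⟩ :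
        Σ i, (F.obj none ⟶ d i)) = s.π.app (op none) p := by
    intro s p j
    exact ConcreteCategory.congr_hom (s.w (Quiver.Hom.op (show @Quiver.Hom (WidePushoutShape J)
      CategoryStruct.toQuiver none (some j) from WidePushoutShape.Hom.init j))) p
  choose ld hld using fun (s : Cone (F.op ⋙ dirichletSum d)) (p : s.pt) =>
    descSigma hc (fun k => s.π.app (op k) p) (hv s p)
  refine ⟨fun s => FintypeCat.homMk fun p => ld s p, ?_, ?_⟩
  · intro s j
    ext p
    exact hld s p j.unop
  · intro s m hm
    ext p
    refine sigmaHomExt hc fun k => ?_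
    exact (ConcreteCategory.congr_hom (hm (op k)) p).trans (hld s p k).symm

end PartA

/-! ### Part B : a functor preserving wide pullbacks is Dirichlet -/

section PartB

variable (D : FintypeCat.{0}ᵒᵖ ⥤ FintypeCat.{0})

attribute [local instance] FintypeCat.fintype

abbrev EE : FintypeCat.{0} := FintypeCat.of PEmpty
abbrev UU : FintypeCat.{0} := FintypeCat.of PUnit

def fromE (X : FintypeCat.{0}) : EE ⟶ X := FintypeCat.homMk fun a => PEmpty.elim a

lemma fromE_eq {X : FintypeCat.{0}} (f : EE ⟶ X) : f = fromE X :=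
  FintypeCat.hom_ext _ _ fun a => PEmpty.elim a

def ptm {X : FintypeCat.{0}} (x : X) : UU ⟶ X := FintypeCat.homMk fun _ => x

/-- The fibers of `D(1) → D(0)`. -/
def dFib : (D.obj (op EE) : Type) → FintypeCat.{0} := fun i =>
  haveI : Fintype {a : D.obj (op UU) // D.map (fromE UU).op a = i} := Fintype.ofFinite _
  FintypeCat.of {a : D.obj (op UU) // D.map (fromE UU).op a = i}

lemma pack_inj {X : FintypeCat.{0}} : Function.Injective
    (fun z : Σ i, (X ⟶ dFib D i) =>
      ((z.1, fun x => (z.2 x).1) : (D.obj (op EE) : Type) × (X → (D.obj (op UU) : Type)))) := by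
  rintro ⟨i, u⟩ ⟨i', u'⟩ h
  obtain ⟨h1, h2⟩ := Prod.mk.injEq _ _ _ _ |>.mp h
  subst h1
  exact congrArg (Sigma.mk i) (FintypeCat.hom_ext _ _ fun x => Subtype.ext (congrFun h2 x))

/-- The comparison natural transformation `D ⟶ dirichletSum (dFib D)`. -/
def eta : D ⟶ dirichletSum (dFib D) where
  app X := FintypeCat.homMk fun y => ⟨D.map (fromE X.unop).op y, FintypeCat.homMk fun x =>
    ⟨D.map (ptm x).op y, by
      have hm : D.map (ptm x).op ≫ D.map (fromE UU).op = D.map (fromE X.unop).op := by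
        rw [← D.map_comp, ← op_comp, fromE_eq (fromE UU ≫ ptm x)]
      exact ConcreteCategory.congr_hom hm y⟩⟩
  naturality A B f := by
    ext y
    apply pack_inj D
    have hm : f ≫ (fromE B.unop).op = (fromE A.unop).op := by
      rw [← f.op_unop, ← op_comp, fromE_eq (fromE B.unop ≫ f.unop)]
    refine Prod.ext ?_ ?_
    · show D.map (fromE B.unop).op (D.map f y) = D.map (fromE A.unop).op y
      have h1 : D.map f ≫ D.map (fromE B.unop).op = D.map (fromE A.unop).op := by
        rw [← D.map_comp, hm]
      exact ConcreteCategory.congr_hom h1 y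
    · funext x
      show D.map (ptm x).op (D.map f y) = D.map (ptm (f.unop x)).op y
      have h1 : D.map f ≫ D.map (ptm x).op = D.map (ptm (f.unop x)).op := by
        rw [← D.map_comp, ← f.op_unop, ← op_comp]
        rfl
      exact ConcreteCategory.congr_hom h1 y

/-- The wide span presenting a finite set as a wide pushout of points. -/
def ptF (X : FintypeCat.{0}) : WidePushoutShape (X : Type) ⥤ FintypeCat.{0} :=
  WidePushoutShape.wideSpan EE (fun _ => UU) (fun _ => fromE UU)

def ptCocone (X : FintypeCat.{0}) : Cocone (ptF X) :=
  WidePushoutShape.mkCocone (fromE X) (fun x => ptm x)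
    (fun _ => (fromE_eq _).trans (fromE_eq _).symm)

def ptIsColimit (X : FintypeCat.{0}) : IsColimit (ptCocone X) where
  desc s := FintypeCat.homMk fun x => s.ι.app (some x) PUnit.unit
  fac s := by
    rintro (_ | x)
    · exact (fromE_eq _).trans (fromE_eq _).symm
    · ext; rfl
  uniq s m hm := by
    ext x
    exact ConcreteCategory.congr_hom (hm (some x)) PUnit.unit

lemma eta_bijective
    (h : ∀ (J : Type) [Finite J] (F : WidePushoutShape J ⥤ FintypeCat.{0}) (c : Cocone F),
        IsColimit c → Nonempty (IsLimit (D.mapCone c.op)))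
    (X : FintypeCat.{0}) :
    Function.Bijective ((eta D).app (op X)) := by
  obtain ⟨hL⟩ := h (X : Type) (ptF X) (ptCocone X) (ptIsColimit X)
  constructor
  · intro y y' hyy
    have h1 : D.map (fromE X).op y = D.map (fromE X).op y' := congrArg Sigma.fst hyy
    have h2 : ∀ x : X, D.map (ptm x).op y = D.map (ptm x).op y' := fun x =>
      congrFun (congrArg (fun z : Σ i, (X ⟶ dFib D i) => fun x => (z.2 x).1) hyy) x
    have := hL.hom_ext (f := (FintypeCat.homMk fun _ => y : UU ⟶ D.obj (op X)))
      (f' := (FintypeCat.homMk fun _ => y' : UU ⟶ D.obj (op X))) ?_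
    · exact ConcreteCategory.congr_hom this PUnit.unit
    · rintro ⟨_ | x⟩
      · ext u; exact h1
      · ext u; exact h2 _
  · rintro ⟨i, g⟩
    let s : Cone ((ptF X).op ⋙ D) :=
      { pt := UU
        π :=
          { app := fun j => Option.rec
              (motive := fun k => (UU : FintypeCat.{0}) ⟶ D.obj (op ((ptF X).obj k)))
              (FintypeCat.homMk fun _ => i) (fun x => FintypeCat.homMk fun _ => ((g x).1 : (D.obj (op UU) : Type))) j.unop
            naturality := by
              rintro ⟨a⟩ ⟨b⟩ ⟨f'⟩
              cases f' using WidePushoutShape.Hom.casesOn with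
              | id a => simp
              | init x =>
                ext u
                simp only [Functor.const_obj_obj, Functor.const_obj_map,
                  CategoryTheory.Category.id_comp, Functor.comp_map, FintypeCat.comp_apply]
                exact ((g x).2).symm } }
    refine ⟨hL.lift s PUnit.unit, ?_⟩
    have h0 : D.map (fromE X).op (hL.lift s PUnit.unit) = i :=
      ConcreteCategory.congr_hom (hL.fac s (op none)) PUnit.unit
    have hx : ∀ x : X, D.map (ptm x).op (hL.lift s PUnit.unit) = (g x).1 := fun x =>
      ConcreteCategory.congr_hom (hL.fac s (op (some x))) PUnit.unit
    apply pack_inj D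
    refine Prod.ext h0 (funext fun x => hx x)

end PartB

end DirichletAux

theorem dirichlet_iff_preserves_widePullbacks (D : FintypeCat.{0}ᵒᵖ ⥤ FintypeCat.{0}) :
    IsDirichlet D ↔
      ∀ (J : Type) [Finite J] (F : WidePushoutShape J ⥤ FintypeCat.{0}) (c : Cocone F),
        IsColimit c → Nonempty (IsLimit (D.mapCone c.op)) := by
  constructor
  · rintro ⟨I, hI, d, ⟨e⟩⟩ J _ F c hc
    exact ⟨IsLimit.mapConeEquiv e.symm (DirichletAux.dirichletSumPreserves d hc)⟩
  · intro h
    haveI : ∀ Y : FintypeCat.{0}ᵒᵖ, IsIso ((DirichletAux.eta D).app Y) := by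
      intro Y
      have hb := DirichletAux.eta_bijective D h Y.unop
      let e := Equiv.ofBijective _ hb
      exact ⟨FintypeCat.homMk e.symm,
        FintypeCat.hom_ext _ _ fun a => e.symm_apply_apply a,
        FintypeCat.hom_ext _ _ fun b => e.apply_symm_apply b⟩
    haveI : IsIso (DirichletAux.eta D) := NatIso.isIso_of_isIso_app _
    exact ⟨_, FintypeCat.fintype, DirichletAux.dFib D, ⟨asIso (DirichletAux.eta D)⟩⟩
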